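/- Let z be a standard bivariate normal vector, φ ∈ (0, π), w > 0, and E(φ) the open cone of half-angle φ/2 about the positive z₂-axis. Then P( sup_{u ∈ E(φ)} (u·z)/‖u‖ < w ) = (φ/(2π))·F₂(w²) + (π-φ)/(2π) + (1/2)·F₁(w²), where F₁ and F₂ are the cdfs of chi-squared distributions with 1 and 2 degrees of freedom respectively. -/

import Mathlib

open MeasureTheory ProbabilityTheory Set Real
open scoped ENNReal NNReal

/-- Dot product on ℝ². -/
def dot2 (u z : ℝ × ℝ) : ℝ := u.1 * z.1 + u.2 * z.2

/-- Euclidean norm on ℝ². -/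
noncomputable def nrm2 (u : ℝ × ℝ) : ℝ := Real.sqrt (u.1 ^ 2 + u.2 ^ 2)

/-- The open cone of half-angle `φ/2` about the positive `z₂`-axis. -/
noncomputable def coneE (φ : ℝ) : Set (ℝ × ℝ) :=
  {u : ℝ × ℝ | u ≠ 0 ∧ u.2 > nrm2 u * Real.cos (φ / 2)}

/-- The cdf of the chi-squared distribution with 2 degrees of freedom: `F₂(t) = 1 - e^{-t/2}`. -/
noncomputable def chi2cdf (t : ℝ) : ℝ := 1 - Real.exp (-(t / 2))

/-- The standard normal cdf `Φ`. -/
noncomputable def stdNormalCDF (x : ℝ) : ℝ := ((gaussianReal 0 1) (Set.Iic x)).toReal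

/-- The cdf of the chi-squared distribution with 1 degree of freedom:
`F₁(t) = 2Φ(√t) - 1` for `t ≥ 0`. -/
noncomputable def chi1cdf (t : ℝ) : ℝ := 2 * stdNormalCDF (Real.sqrt t) - 1

namespace OSC

lemma nrm2_nonneg (u : ℝ × ℝ) : 0 ≤ nrm2 u := Real.sqrt_nonneg _

lemma nrm2_sq (u : ℝ × ℝ) : nrm2 u ^ 2 = u.1 ^ 2 + u.2 ^ 2 :=
  Real.sq_sqrt (by positivity)

lemma nrm2_pos {u : ℝ × ℝ} (hu : u ≠ 0) : 0 < nrm2 u := by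
  apply Real.sqrt_pos.2
  have h : u.1 ≠ 0 ∨ u.2 ≠ 0 := by
    by_contra hc
    push_neg at hc
    exact hu (Prod.ext hc.1 hc.2)
  rcases h with h | h
  · nlinarith [sq_nonneg u.2, sq_pos_of_ne_zero h]
  · nlinarith [sq_nonneg u.1, sq_pos_of_ne_zero h]

lemma dot2_le (u z : ℝ × ℝ) : dot2 u z ≤ nrm2 u * nrm2 z := by
  have h1 := nrm2_sq u
  have h2 := nrm2_sq z
  have h3 := nrm2_nonneg u
  have h4 := nrm2_nonneg z
  show u.1 * z.1 + u.2 * z.2 ≤ nrm2 u * nrm2 z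
  nlinarith [sq_nonneg (u.1 * z.2 - u.2 * z.1), mul_nonneg h3 h4,
    sq_nonneg (nrm2 u * nrm2 z - (u.1 * z.1 + u.2 * z.2)), sq_nonneg (u.1*z.1 + u.2*z.2)]

lemma hc_pos {φ : ℝ} (hφ : φ ∈ Set.Ioo 0 π) : 0 < Real.cos (φ / 2) := by
  apply Real.cos_pos_of_mem_Ioo
  constructor
  · have := Real.pi_pos; nlinarith [hφ.1]
  · nlinarith [hφ.2, Real.pi_pos]

lemma hc_lt_one {φ : ℝ} (hφ : φ ∈ Set.Ioo 0 π) : Real.cos (φ / 2) < 1 := by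
  have h := Real.cos_lt_cos_of_nonneg_of_le_pi (le_refl 0)
    (by nlinarith [hφ.2, Real.pi_pos] : φ / 2 ≤ π) (by nlinarith [hφ.1])
  simpa using h

lemma hs_pos {φ : ℝ} (hφ : φ ∈ Set.Ioo 0 π) : 0 < Real.sin (φ / 2) := by
  apply Real.sin_pos_of_pos_of_lt_pi
  · nlinarith [hφ.1]
  · nlinarith [hφ.2, Real.pi_pos]

lemma hcs (φ : ℝ) : Real.cos (φ / 2) ^ 2 + Real.sin (φ / 2) ^ 2 = 1 := by
  rw [add_comm]; exact Real.sin_sq_add_cos_sq _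

lemma axis_mem {φ : ℝ} (hφ : φ ∈ Set.Ioo 0 π) : ((0 : ℝ), (1 : ℝ)) ∈ coneE φ := by
  constructor
  · simp [Prod.ext_iff]
  · have : nrm2 ((0 : ℝ), (1 : ℝ)) = 1 := by simp [nrm2]
    rw [this, one_mul]
    exact hc_lt_one hφ

lemma cone_u2_pos {φ : ℝ} (hφ : φ ∈ Set.Ioo 0 π) {u : ℝ × ℝ} (hu : u ∈ coneE φ) : 0 < u.2 :=
  lt_of_le_of_lt (mul_nonneg (nrm2_nonneg u) (hc_pos hφ).le) hu.2

/-- In the cone, `u · n₊ < 0` : `cos(φ/2) * u.1 < sin(φ/2) * u.2`. -/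
lemma cone_np {φ : ℝ} (hφ : φ ∈ Set.Ioo 0 π) {u : ℝ × ℝ} (hu : u ∈ coneE φ) :
    Real.cos (φ / 2) * u.1 < Real.sin (φ / 2) * u.2 := by
  have h2 := cone_u2_pos hφ hu
  have hn := nrm2_sq u
  have hnn := nrm2_nonneg u
  have hgt := hu.2
  have hc := hc_pos hφ
  have hs := hs_pos hφ
  have hcs := hcs φ
  have key := mul_self_lt_mul_self (mul_nonneg hnn hc.le) hgt
  have hsq : nrm2 u ^ 2 * Real.cos (φ / 2) ^ 2 < u.2 ^ 2 := by nlinarith [key]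
  rw [hn] at hsq
  rcases le_or_gt u.1 0 with h1 | h1
  · nlinarith
  · by_contra hcon
    push_neg at hcon
    have h5 : Real.sin (φ / 2) * u.2 * (Real.sin (φ / 2) * u.2) ≤
        Real.cos (φ / 2) * u.1 * (Real.cos (φ / 2) * u.1) :=
      mul_self_le_mul_self (mul_pos hs h2).le hcon
    nlinarith [h5, sq_nonneg u.2, sq_nonneg u.1]




noncomputable def supf (φ : ℝ) (z : ℝ × ℝ) : ℝ :=
  sSup ((fun u => dot2 u z / nrm2 u) '' coneE φ)

lemma img_nonempty {φ : ℝ} (hφ : φ ∈ Set.Ioo 0 π) (z : ℝ × ℝ) :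
    ((fun u => dot2 u z / nrm2 u) '' coneE φ).Nonempty :=
  ⟨_, Set.mem_image_of_mem _ (axis_mem hφ)⟩

lemma img_bddAbove (φ : ℝ) (z : ℝ × ℝ) :
    BddAbove ((fun u => dot2 u z / nrm2 u) '' coneE φ) := by
  refine ⟨nrm2 z, ?_⟩
  rintro x ⟨u, hu, rfl⟩
  rw [div_le_iff₀ (nrm2_pos hu.1)]
  rw [mul_comm]
  exact dot2_le u z

lemma supf_le {φ : ℝ} (hφ : φ ∈ Set.Ioo 0 π) {z : ℝ × ℝ} {B : ℝ}
    (h : ∀ u ∈ coneE φ, dot2 u z ≤ nrm2 u * B) : supf φ z ≤ B := by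
  apply csSup_le (img_nonempty hφ z)
  rintro x ⟨u, hu, rfl⟩
  rw [div_le_iff₀ (nrm2_pos hu.1), mul_comm]
  exact h u hu

lemma le_supf {φ : ℝ} {z u : ℝ × ℝ} (hu : u ∈ coneE φ) :
    dot2 u z / nrm2 u ≤ supf φ z :=
  le_csSup (img_bddAbove φ z) (Set.mem_image_of_mem _ hu)

lemma reflect_mem_cone {φ : ℝ} {u : ℝ × ℝ} (hu : u ∈ coneE φ) :
    ((-u.1, u.2) : ℝ × ℝ) ∈ coneE φ := by
  have hn : nrm2 ((-u.1, u.2) : ℝ × ℝ) = nrm2 u := by simp [nrm2]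
  constructor
  · intro h
    rw [Prod.ext_iff] at h
    simp only at h
    exact hu.1 (Prod.ext (by simpa using h.1) h.2)
  · show ((-u.1 : ℝ), u.2).2 > nrm2 (-u.1, u.2) * Real.cos (φ / 2)
    rw [hn]
    exact hu.2

lemma supf_reflect (φ : ℝ) (z : ℝ × ℝ) : supf φ ((-z.1, z.2)) = supf φ z := by
  unfold supf
  congr 1
  ext y
  constructor
  · rintro ⟨u, hu, rfl⟩
    refine ⟨(-u.1, u.2), reflect_mem_cone hu, ?_⟩
    have hn : nrm2 ((-u.1, u.2) : ℝ × ℝ) = nrm2 u := by simp [nrm2]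
    simp only [dot2, hn]
    ring_nf
  · rintro ⟨u, hu, rfl⟩
    refine ⟨(-u.1, u.2), reflect_mem_cone hu, ?_⟩
    have hn : nrm2 ((-u.1, u.2) : ℝ × ℝ) = nrm2 u := by simp [nrm2]
    simp only [dot2, hn]
    ring_nf

/-- lower bound: the boundary direction `(sin(φ/2), cos(φ/2))` value is `≤ supf`. -/
lemma eplus_le_supf {φ : ℝ} (hφ : φ ∈ Set.Ioo 0 π) (z : ℝ × ℝ) :
    Real.sin (φ / 2) * z.1 + Real.cos (φ / 2) * z.2 ≤ supf φ z := by
  set c := Real.cos (φ / 2) with hcdef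
  set s := Real.sin (φ / 2) with hsdef
  have hc := hc_pos hφ
  have hc1 := hc_lt_one hφ
  have hs := hs_pos hφ
  have hcs := hcs φ
  set F : ℝ → ℝ × ℝ := fun t => ((1 - t) * s, (1 - t) * c + t) with hF
  have hmem : ∀ t ∈ Set.Ioo (0:ℝ) 1, F t ∈ coneE φ := by
    intro t ht
    have h2pos : 0 < (1 - t) * c + t := by nlinarith [ht.1, ht.2]
    have hnlt : nrm2 (F t) < 1 := by
      have hsq : nrm2 (F t) ^ 2 < 1 := by
        rw [nrm2_sq]
        show ((1 - t) * s) ^ 2 + ((1 - t) * c + t) ^ 2 < 1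
        nlinarith [ht.1, ht.2, mul_pos ht.1 (by linarith [ht.2] : (0:ℝ) < 1 - t)]
      nlinarith [nrm2_nonneg (F t)]
    constructor
    · intro h
      rw [Prod.ext_iff] at h
      simp only [hF] at h
      exact absurd h.2 (by simpa using h2pos.ne')
    · show ((1 - t) * c + t : ℝ) > nrm2 (F t) * c
      have : nrm2 (F t) * c < c := by nlinarith [nrm2_nonneg (F t)]
      nlinarith [ht.1]
  have hF0 : F 0 = ((s : ℝ), (c : ℝ)) := by simp [hF]
  have hnrmF0 : nrm2 (F 0) = 1 := by
    rw [hF0]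
    show Real.sqrt (s ^ 2 + c ^ 2) = 1
    rw [add_comm, hcs, Real.sqrt_one]
  have hcont : ContinuousAt (fun t => dot2 (F t) z / nrm2 (F t)) 0 := by
    apply ContinuousAt.div
    · apply Continuous.continuousAt
      show Continuous fun t => ((1 - t) * s) * z.1 + ((1 - t) * c + t) * z.2
      fun_prop
    · apply Continuous.continuousAt
      show Continuous fun t => Real.sqrt (((1 - t) * s) ^ 2 + ((1 - t) * c + t) ^ 2)
      fun_prop
    · rw [hnrmF0]; norm_num
  have hlim : Filter.Tendsto (fun t => dot2 (F t) z / nrm2 (F t))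
      (nhdsWithin 0 (Set.Ioo (0:ℝ) 1)) (nhds (s * z.1 + c * z.2)) := by
    have h0 : dot2 (F 0) z / nrm2 (F 0) = s * z.1 + c * z.2 := by
      rw [hnrmF0, hF0, div_one]
      simp [dot2]
    have := hcont.tendsto
    rw [h0] at this
    exact this.mono_left nhdsWithin_le_nhds
  haveI : (nhdsWithin (0:ℝ) (Set.Ioo (0:ℝ) 1)).NeBot := by
    apply mem_closure_iff_nhdsWithin_neBot.1
    rw [closure_Ioo (by norm_num : (0:ℝ) ≠ 1)]
    exact ⟨le_refl 0, by norm_num⟩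
  apply le_of_tendsto hlim
  filter_upwards [self_mem_nhdsWithin] with t ht
  exact le_supf (hmem t ht)




/-- Parseval-type expansion in the orthonormal basis `e₊ = (s,c)`, `n₊ = (c,-s)`. -/
lemma dot2_expand {φ : ℝ} (u z : ℝ × ℝ) :
    dot2 u z = (Real.sin (φ/2) * u.1 + Real.cos (φ/2) * u.2) *
        (Real.sin (φ/2) * z.1 + Real.cos (φ/2) * z.2)
      + (Real.cos (φ/2) * u.1 - Real.sin (φ/2) * u.2) *
        (Real.cos (φ/2) * z.1 - Real.sin (φ/2) * z.2) := by
  have h := hcs φ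
  show u.1 * z.1 + u.2 * z.2 = _
  linear_combination (u.1 * z.1 + u.2 * z.2) * h.symm

/-- Upper bound when `z` is on/beyond the `+` boundary: `supf ≤ z·e₊`. -/
lemma supf_le_eplus {φ : ℝ} (hφ : φ ∈ Set.Ioo 0 π) {z : ℝ × ℝ}
    (ht : 0 ≤ Real.cos (φ/2) * z.1 - Real.sin (φ/2) * z.2)
    (ha : 0 ≤ Real.sin (φ/2) * z.1 + Real.cos (φ/2) * z.2) :
    supf φ z ≤ Real.sin (φ/2) * z.1 + Real.cos (φ/2) * z.2 := by
  apply supf_le hφ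
  intro u hu
  rw [dot2_expand (φ := φ) u z]
  have h1 : Real.cos (φ/2) * u.1 - Real.sin (φ/2) * u.2 < 0 := by
    have := cone_np hφ hu
    linarith
  have h2 : Real.sin (φ/2) * u.1 + Real.cos (φ/2) * u.2 ≤ nrm2 u := by
    have := dot2_le u ((Real.sin (φ/2), Real.cos (φ/2)) : ℝ × ℝ)
    have hn : nrm2 ((Real.sin (φ/2), Real.cos (φ/2)) : ℝ × ℝ) = 1 := by
      show Real.sqrt (Real.sin (φ/2) ^ 2 + Real.cos (φ/2) ^ 2) = 1
      rw [add_comm, hcs, Real.sqrt_one]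
    rw [hn, mul_one] at this
    calc Real.sin (φ/2) * u.1 + Real.cos (φ/2) * u.2
        = dot2 u ((Real.sin (φ/2), Real.cos (φ/2)) : ℝ × ℝ) := by
          show _ = u.1 * Real.sin (φ/2) + u.2 * Real.cos (φ/2); ring
      _ ≤ nrm2 u := this
  nlinarith [mul_nonneg ht (neg_nonneg.2 h1.le), mul_le_mul_of_nonneg_right h2 ha]

/-- Upper bound `supf ≤ 0` when `z` is beyond the `+` boundary by more than `π/2`. -/
lemma supf_le_zero_plus {φ : ℝ} (hφ : φ ∈ Set.Ioo 0 π) {z : ℝ × ℝ}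
    (ht : 0 ≤ Real.cos (φ/2) * z.1 - Real.sin (φ/2) * z.2)
    (ha : Real.sin (φ/2) * z.1 + Real.cos (φ/2) * z.2 < 0)
    (htm : 0 < Real.cos (φ/2) * z.1 + Real.sin (φ/2) * z.2) :
    supf φ z ≤ 0 := by
  have hc := hc_pos hφ
  have hs := hs_pos hφ
  have hz1 : 0 < z.1 := by nlinarith
  have hz2 : z.2 < 0 := by nlinarith
  apply supf_le hφ
  intro u hu
  rw [mul_zero]
  have hnp := cone_np hφ hu
  have hu2 := cone_u2_pos hφ hu
  -- c * dot2 u z ≤ u.2 * (s z.1 + c z.2) < 0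
  have key : Real.cos (φ/2) * dot2 u z ≤ u.2 * (Real.sin (φ/2) * z.1 + Real.cos (φ/2) * z.2) := by
    show Real.cos (φ/2) * (u.1 * z.1 + u.2 * z.2) ≤ _
    nlinarith [mul_lt_mul_of_pos_right hnp hz1]
  nlinarith [mul_pos hu2 (neg_pos.2 ha)]

/-- Upper bound `supf ≤ 0` when `z` is "behind": both boundary values negative. -/
lemma supf_le_zero_both {φ : ℝ} (hφ : φ ∈ Set.Ioo 0 π) {z : ℝ × ℝ}
    (ha : Real.sin (φ/2) * z.1 + Real.cos (φ/2) * z.2 < 0)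
    (hb : -(Real.sin (φ/2)) * z.1 + Real.cos (φ/2) * z.2 < 0) :
    supf φ z ≤ 0 := by
  have hc := hc_pos hφ
  have hs := hs_pos hφ
  have hz2 : z.2 < 0 := by nlinarith
  apply supf_le hφ
  intro u hu
  rw [mul_zero]
  have hnp := cone_np hφ hu
  have hnm : Real.cos (φ/2) * (-u.1) < Real.sin (φ/2) * u.2 := by
    have := cone_np hφ (reflect_mem_cone hu)
    simpa using this
  have hu2 := cone_u2_pos hφ hu
  show u.1 * z.1 + u.2 * z.2 ≤ 0
  rcases le_or_gt 0 z.1 with hz1 | hz1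
  · -- use a < 0 : c*(u1 z1 + u2 z2) ≤ s u2 z1 + c u2 z2 = u2 * a < 0
    nlinarith [mul_le_mul_of_nonneg_right hnp.le hz1, mul_pos hu2 (neg_pos.2 ha)]
  · -- use b < 0
    nlinarith [mul_le_mul_of_nonneg_right hnm.le (by linarith : (0:ℝ) ≤ -z.1),
      mul_pos hu2 (neg_pos.2 hb)]

/-- If `z ∉ cone` and `z ≠ 0` then one of the two outward normal products is nonnegative. -/
lemma normals_of_not_cone {φ : ℝ} (hφ : φ ∈ Set.Ioo 0 π) {z : ℝ × ℝ} (hz : z ≠ 0)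
    (hnc : z ∉ coneE φ) :
    0 ≤ Real.cos (φ/2) * z.1 - Real.sin (φ/2) * z.2 ∨
    0 ≤ -(Real.cos (φ/2)) * z.1 - Real.sin (φ/2) * z.2 := by
  have hc := hc_pos hφ
  have hs := hs_pos hφ
  have hcs := hcs φ
  have hle : z.2 ≤ nrm2 z * Real.cos (φ/2) := by
    by_contra h
    push_neg at h
    exact hnc ⟨hz, h⟩
  by_contra hcon
  push_neg at hcon
  obtain ⟨h1, h2⟩ := hcon
  have hz2 : 0 < Real.sin (φ/2) * z.2 := by nlinarith
  have hz2' : 0 < z.2 := by nlinarith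
  have hn := nrm2_sq z
  have hnn := nrm2_nonneg z
  -- c |z.1| < s z.2 so c² z1² < s² z2², but z.2 ≤ nrm2 z c gives z2² s² ≤ c² z1².
  have hsq : z.2 ^ 2 ≤ (z.1 ^ 2 + z.2 ^ 2) * Real.cos (φ/2) ^ 2 := by
    have := mul_self_le_mul_self hz2'.le hle
    nlinarith [this]
  rcases le_or_gt 0 z.1 with h3 | h3
  · nlinarith [mul_self_lt_mul_self (by positivity : (0:ℝ) ≤ Real.cos (φ/2) * z.1) (by linarith : Real.cos (φ/2) * z.1 < Real.sin (φ/2) * z.2)]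
  · nlinarith [mul_self_lt_mul_self (by nlinarith : (0:ℝ) ≤ Real.cos (φ/2) * (-z.1)) (by linarith : Real.cos (φ/2) * (-z.1) < Real.sin (φ/2) * z.2)]




def setC (φ w : ℝ) : Set (ℝ × ℝ) := {z | z ∈ coneE φ ∧ w ≤ nrm2 z}

def setWp (φ w : ℝ) : Set (ℝ × ℝ) :=
  {z | w ≤ Real.sin (φ/2) * z.1 + Real.cos (φ/2) * z.2 ∧
       0 ≤ Real.cos (φ/2) * z.1 - Real.sin (φ/2) * z.2}

def setWm (φ w : ℝ) : Set (ℝ × ℝ) :=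
  {z | w ≤ -(Real.sin (φ/2)) * z.1 + Real.cos (φ/2) * z.2 ∧
       0 ≤ -(Real.cos (φ/2)) * z.1 - Real.sin (φ/2) * z.2}

lemma nrm2_le_supf {φ : ℝ} {z : ℝ × ℝ} (hz : z ∈ coneE φ) : nrm2 z ≤ supf φ z := by
  have h := le_supf (z := z) hz
  have hpos := nrm2_pos hz.1
  have : dot2 z z / nrm2 z = nrm2 z := by
    show (z.1 * z.1 + z.2 * z.2) / nrm2 z = nrm2 z
    rw [show z.1 * z.1 + z.2 * z.2 = nrm2 z ^ 2 by rw [nrm2_sq]; ring]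
    rw [sq]
    field_simp
  rwa [this] at h

lemma eminus_le_supf {φ : ℝ} (hφ : φ ∈ Set.Ioo 0 π) (z : ℝ × ℝ) :
    -(Real.sin (φ/2)) * z.1 + Real.cos (φ/2) * z.2 ≤ supf φ z := by
  have h := eplus_le_supf hφ ((-z.1, z.2))
  rw [supf_reflect] at h
  calc -(Real.sin (φ/2)) * z.1 + Real.cos (φ/2) * z.2
      = Real.sin (φ/2) * (-z.1, z.2).1 + Real.cos (φ/2) * (-z.1, z.2).2 := by simp
    _ ≤ supf φ z := h

lemma supf_le_eminus {φ : ℝ} (hφ : φ ∈ Set.Ioo 0 π) {z : ℝ × ℝ}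
    (ht : 0 ≤ -(Real.cos (φ/2)) * z.1 - Real.sin (φ/2) * z.2)
    (ha : 0 ≤ -(Real.sin (φ/2)) * z.1 + Real.cos (φ/2) * z.2) :
    supf φ z ≤ -(Real.sin (φ/2)) * z.1 + Real.cos (φ/2) * z.2 := by
  have h := supf_le_eplus hφ (z := (-z.1, z.2)) (by simpa using by linarith : _) ?_
  · rw [supf_reflect] at h
    calc supf φ z ≤ Real.sin (φ/2) * (-z.1, z.2).1 + Real.cos (φ/2) * (-z.1, z.2).2 := h
      _ = -(Real.sin (φ/2)) * z.1 + Real.cos (φ/2) * z.2 := by simp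
  · show 0 ≤ Real.sin (φ/2) * (-z.1, z.2).1 + Real.cos (φ/2) * (-z.1, z.2).2
    simp only
    linarith

theorem event_iff {φ w : ℝ} (hφ : φ ∈ Set.Ioo 0 π) (hw : 0 < w) (z : ℝ × ℝ) :
    supf φ z < w ↔ z ∉ setC φ w ∧ z ∉ setWp φ w ∧ z ∉ setWm φ w := by
  have hc := hc_pos hφ
  have hs := hs_pos hφ
  have hcsq := hcs φ
  constructor
  · intro h
    refine ⟨?_, ?_, ?_⟩
    · intro hz
      exact absurd h (not_lt.2 (le_trans hz.2 (nrm2_le_supf hz.1)))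
    · intro hz
      exact absurd h (not_lt.2 (le_trans hz.1 (eplus_le_supf hφ z)))
    · intro hz
      exact absurd h (not_lt.2 (le_trans hz.1 (eminus_le_supf hφ z)))
  · rintro ⟨h1, h2, h3⟩
    by_cases hzc : z ∈ coneE φ
    · have : ¬ (w ≤ nrm2 z) := fun hh => h1 ⟨hzc, hh⟩
      push_neg at this
      calc supf φ z ≤ nrm2 z := supf_le hφ (fun u _ => dot2_le u z)
        _ < w := this
    · by_cases hz0 : z = 0
      · have : supf φ z ≤ 0 := by
          apply supf_le hφ
          intro u _
          subst hz0
          show u.1 * 0 + u.2 * 0 ≤ nrm2 u * 0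
          ring_nf
          exact le_refl 0
        linarith
      · have hle : z.2 ≤ nrm2 z * Real.cos (φ/2) := by
          by_contra hh
          push_neg at hh
          exact hzc ⟨hz0, hh⟩
        have hn := nrm2_sq z
        have hnn := nrm2_nonneg z
        by_cases ha : Real.sin (φ/2) * z.1 + Real.cos (φ/2) * z.2 < 0
        · by_cases hb : -(Real.sin (φ/2)) * z.1 + Real.cos (φ/2) * z.2 < 0
          · exact lt_of_le_of_lt (supf_le_zero_both hφ ha hb) hw
          · push_neg at hb
            have hz1 : z.1 < 0 := by nlinarith
            have htm : 0 ≤ -(Real.cos (φ/2)) * z.1 - Real.sin (φ/2) * z.2 := by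
              rcases le_or_gt z.2 0 with h4 | h4
              · nlinarith
              · by_contra hcon
                push_neg at hcon
                have hq : z.2 ^ 2 ≤ (z.1 ^ 2 + z.2 ^ 2) * Real.cos (φ/2) ^ 2 := by
                  nlinarith [mul_self_le_mul_self h4.le hle]
                nlinarith [mul_self_lt_mul_self
                  (by nlinarith : (0:ℝ) ≤ Real.cos (φ/2) * (-z.1))
                  (by linarith : Real.cos (φ/2) * (-z.1) < Real.sin (φ/2) * z.2)]
            have hblt : -(Real.sin (φ/2)) * z.1 + Real.cos (φ/2) * z.2 < w := by
              by_contra hcon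
              push_neg at hcon
              exact h3 ⟨hcon, htm⟩
            exact lt_of_le_of_lt (supf_le_eminus hφ htm hb) hblt
        · push_neg at ha
          by_cases hb : -(Real.sin (φ/2)) * z.1 + Real.cos (φ/2) * z.2 < 0
          · have hz1 : 0 < z.1 := by nlinarith
            have htp : 0 ≤ Real.cos (φ/2) * z.1 - Real.sin (φ/2) * z.2 := by
              rcases le_or_gt z.2 0 with h4 | h4
              · nlinarith
              · by_contra hcon
                push_neg at hcon
                have hq : z.2 ^ 2 ≤ (z.1 ^ 2 + z.2 ^ 2) * Real.cos (φ/2) ^ 2 := by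
                  nlinarith [mul_self_le_mul_self h4.le hle]
                nlinarith [mul_self_lt_mul_self
                  (by nlinarith : (0:ℝ) ≤ Real.cos (φ/2) * z.1)
                  (by linarith : Real.cos (φ/2) * z.1 < Real.sin (φ/2) * z.2)]
            have halt : Real.sin (φ/2) * z.1 + Real.cos (φ/2) * z.2 < w := by
              by_contra hcon
              push_neg at hcon
              exact h2 ⟨hcon, htp⟩
            exact lt_of_le_of_lt (supf_le_eplus hφ htp ha) halt
          · push_neg at hb
            rcases normals_of_not_cone hφ hz0 hzc with htp | htm
            · have halt : Real.sin (φ/2) * z.1 + Real.cos (φ/2) * z.2 < w := by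
                by_contra hcon
                push_neg at hcon
                exact h2 ⟨hcon, htp⟩
              exact lt_of_le_of_lt (supf_le_eplus hφ htp ha) halt
            · have hblt : -(Real.sin (φ/2)) * z.1 + Real.cos (φ/2) * z.2 < w := by
                by_contra hcon
                push_neg at hcon
                exact h3 ⟨hcon, htm⟩
              exact lt_of_le_of_lt (supf_le_eminus hφ htm hb) hblt

/-- The event set equals the complement of the disjoint union. -/
theorem event_eq {φ w : ℝ} (hφ : φ ∈ Set.Ioo 0 π) (hw : 0 < w) :
    {z : ℝ × ℝ | sSup ((fun u => dot2 u z / nrm2 u) '' coneE φ) < w} =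
      (setC φ w ∪ setWp φ w ∪ setWm φ w)ᶜ := by
  ext z
  have := event_iff hφ hw z
  simp only [Set.mem_setOf_eq, Set.mem_compl_iff, Set.mem_union]
  rw [show sSup ((fun u => dot2 u z / nrm2 u) '' coneE φ) = supf φ z from rfl]
  rw [this]
  tauto

/-- Pairwise disjointness. -/
lemma disj_C_Wp {φ w : ℝ} (hφ : φ ∈ Set.Ioo 0 π) : setC φ w ∩ setWp φ w = ∅ := by
  ext z
  simp only [Set.mem_inter_iff, Set.mem_empty_iff_false, iff_false, not_and]
  intro h1 h2
  have := cone_np hφ h1.1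
  have := h2.2
  linarith

lemma disj_C_Wm {φ w : ℝ} (hφ : φ ∈ Set.Ioo 0 π) : setC φ w ∩ setWm φ w = ∅ := by
  ext z
  simp only [Set.mem_inter_iff, Set.mem_empty_iff_false, iff_false, not_and]
  intro h1 h2
  have h := cone_np hφ (reflect_mem_cone h1.1)
  simp only at h
  have := h2.2
  linarith

lemma disj_Wp_Wm {φ w : ℝ} (hφ : φ ∈ Set.Ioo 0 π) (hw : 0 < w) :
    setWp φ w ∩ setWm φ w = ∅ := by
  ext z
  simp only [Set.mem_inter_iff, Set.mem_empty_iff_false, iff_false, not_and]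
  intro h1 h2
  have hc := hc_pos hφ
  have hs := hs_pos hφ
  have ha := h1.1
  have htp := h1.2
  have hb := h2.1
  have htm := h2.2
  -- a + b = 2 c z2 ≥ 2w > 0 so z2 > 0 ; t₊ + t₋ = -2 s z2 ≥ 0 so z2 ≤ 0
  nlinarith




noncomputable def gden : ℝ × ℝ → ℝ≥0∞ :=
  fun p => gaussianPDF 0 1 p.1 * gaussianPDF 0 1 p.2

lemma gden_meas : Measurable gden :=
  ((measurable_gaussianPDF 0 1).comp measurable_fst).mul
    ((measurable_gaussianPDF 0 1).comp measurable_snd)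

lemma mu2_eq : (gaussianReal 0 1).prod (gaussianReal 0 1) =
    (volume : Measure (ℝ × ℝ)).withDensity gden := by
  rw [gaussianReal_of_var_ne_zero 0 one_ne_zero]
  haveI : IsFiniteMeasure (volume.withDensity (gaussianPDF 0 1)) :=
    isFiniteMeasure_withDensity (by rw [lintegral_gaussianPDF_eq_one 0 one_ne_zero]; exact ENNReal.one_ne_top)
  refine Measure.prod_eq fun s t hs ht => ?_
  rw [Measure.volume_eq_prod, withDensity_apply _ (hs.prod ht)]
  rw [← Measure.prod_restrict]
  show ∫⁻ z : ℝ × ℝ, gaussianPDF 0 1 z.1 * gaussianPDF 0 1 z.2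
      ∂(volume.restrict s).prod (volume.restrict t) = _
  rw [lintegral_prod_mul ((measurable_gaussianPDF 0 1).aemeasurable)
    ((measurable_gaussianPDF 0 1).aemeasurable)]
  rw [withDensity_apply _ hs, withDensity_apply _ ht]

lemma Dmul (x y : ℝ) : gaussianPDFReal 0 1 x * gaussianPDFReal 0 1 y
    = (2 * π)⁻¹ * Real.exp (-(x ^ 2 + y ^ 2) / 2) := by
  unfold gaussianPDFReal
  have h2π : Real.sqrt (2 * π) * Real.sqrt (2 * π) = 2 * π :=
    Real.mul_self_sqrt (by positivity)
  push_cast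
  simp only [sub_zero, mul_one]
  have hre : (Real.sqrt (2 * π))⁻¹ * Real.exp (-x ^ 2 / 2) *
      ((Real.sqrt (2 * π))⁻¹ * Real.exp (-y ^ 2 / 2)) =
      ((Real.sqrt (2 * π))⁻¹ * (Real.sqrt (2 * π))⁻¹) *
        (Real.exp (-x ^ 2 / 2) * Real.exp (-y ^ 2 / 2)) := by ring
  rw [hre, ← Real.exp_add, ← mul_inv, h2π]
  congr 1
  ring

lemma gden_eq (p : ℝ × ℝ) :
    gden p = ENNReal.ofReal ((2 * π)⁻¹ * Real.exp (-(p.1 ^ 2 + p.2 ^ 2) / 2)) := by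
  unfold gden gaussianPDF
  rw [← ENNReal.ofReal_mul (gaussianPDFReal_nonneg 0 1 p.1), Dmul]

/-- Rotation invariance of the bivariate standard Gaussian. -/
lemma map_rot_eq {a b d e : ℝ}
    (hnorm : ∀ z : ℝ × ℝ, (a * z.1 + b * z.2) ^ 2 + (d * z.1 + e * z.2) ^ 2 = z.1 ^ 2 + z.2 ^ 2)
    (hdet : a * e - b * d = 1 ∨ a * e - b * d = -1)
    {A : Set (ℝ × ℝ)} (hA : MeasurableSet A) :
    ((gaussianReal 0 1).prod (gaussianReal 0 1))
        ((fun z : ℝ × ℝ => (a * z.1 + b * z.2, d * z.1 + e * z.2)) ⁻¹' A)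
      = ((gaussianReal 0 1).prod (gaussianReal 0 1)) A := by
  set Tf : ℝ × ℝ → ℝ × ℝ := fun z => (a * z.1 + b * z.2, d * z.1 + e * z.2) with hTf
  have Tmeas : Measurable Tf := by
    apply Measurable.prod <;> dsimp [Tf] <;> fun_prop
  set T : (ℝ × ℝ) →ₗ[ℝ] (ℝ × ℝ) :=
    Matrix.toLin (Module.Basis.finTwoProd ℝ) (Module.Basis.finTwoProd ℝ) !![a, b; d, e] with hT
  have hTapp : ⇑T = Tf := by
    funext z
    rw [hT, Matrix.toLin_finTwoProd_apply]
  have hdet' : LinearMap.det T = a * e - b * d := by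
    rw [hT, LinearMap.det_toLin, Matrix.det_fin_two_of]
  have hdetne : LinearMap.det T ≠ 0 := by
    rw [hdet']; rcases hdet with h | h <;> rw [h] <;> norm_num
  have hvolmap : Measure.map Tf (volume : Measure (ℝ × ℝ)) = volume := by
    apply Measure.ext
    intro B hB
    rw [Measure.map_apply Tmeas hB]
    have := Measure.addHaar_preimage_linearMap (volume : Measure (ℝ × ℝ)) hdetne B
    rw [hTapp] at this
    rw [this, hdet']
    rcases hdet with h | h <;> rw [h] <;> norm_num
  have hg : ∀ z, gden (Tf z) = gden z := by
    intro z
    have h : (Tf z).1 ^ 2 + (Tf z).2 ^ 2 = z.1 ^ 2 + z.2 ^ 2 := hnorm z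
    rw [gden_eq, gden_eq, h]
  rw [mu2_eq, withDensity_apply _ (Tmeas hA), withDensity_apply _ hA]
  rw [← lintegral_indicator (Tmeas hA) gden, ← lintegral_indicator hA gden]
  have hind : ∀ z, (Tf ⁻¹' A).indicator gden z = A.indicator gden (Tf z) := by
    intro z
    by_cases h : Tf z ∈ A
    · rw [Set.indicator_of_mem h, Set.indicator_of_mem (Set.mem_preimage.2 h), hg]
    · have hz : z ∉ Tf ⁻¹' A := fun hh => h hh
      rw [Set.indicator_of_notMem hz, Set.indicator_of_notMem h]
  calc ∫⁻ z, (Tf ⁻¹' A).indicator gden z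
      = ∫⁻ z, A.indicator gden (Tf z) := by
        apply lintegral_congr hind
    _ = ∫⁻ y, A.indicator gden y ∂(Measure.map Tf volume) :=
        (lintegral_map (gden_meas.indicator hA) Tmeas).symm
    _ = ∫⁻ y, A.indicator gden y := by rw [hvolmap]




lemma mu1_singleton (x : ℝ) : gaussianReal 0 1 {x} = 0 :=
  gaussianReal_absolutelyContinuous 0 one_ne_zero (Real.volume_singleton)

instance : NullSingletonClass (gaussianReal 0 1) := ⟨mu1_singleton⟩

lemma mu1_Iic_le_one (x : ℝ) : gaussianReal 0 1 (Set.Iic x) ≤ 1 :=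
  prob_le_one

lemma mu1_Ici (x : ℝ) :
    gaussianReal 0 1 (Set.Ici x) = 1 - gaussianReal 0 1 (Set.Iic x) := by
  rw [← measure_congr (Ioi_ae_eq_Ici (μ := gaussianReal 0 1) (a := x))]
  rw [← Set.compl_Iic]
  exact prob_compl_eq_one_sub measurableSet_Iic

lemma mu1_Ici_toReal (x : ℝ) :
    ((gaussianReal 0 1) (Set.Ici x)).toReal = 1 - stdNormalCDF x := by
  rw [mu1_Ici, ENNReal.toReal_sub_of_le (mu1_Iic_le_one x) ENNReal.one_ne_top]
  simp [stdNormalCDF]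

lemma mu1_Ici_zero_toReal : ((gaussianReal 0 1) (Set.Ici (0:ℝ))).toReal = 1 / 2 := by
  have hmap : Measure.map (fun x : ℝ => -x) (gaussianReal 0 1) = gaussianReal 0 1 := by
    have h := gaussianReal_map_const_mul (μ := 0) (v := 1) (-1)
    have : (fun x : ℝ => -x) = ((-1 : ℝ) * ·) := by funext x; ring
    rw [this, h]
    norm_num
  have hIic : gaussianReal 0 1 (Set.Iic (0:ℝ)) = gaussianReal 0 1 (Set.Ici (0:ℝ)) := by
    conv_rhs => rw [← hmap]
    rw [Measure.map_apply (measurable_neg) measurableSet_Ici]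
    congr 1
    ext y
    simp
  have hsum := mu1_Ici (0 : ℝ)
  rw [← hIic] at hsum
  have h1 := mu1_Iic_le_one (0 : ℝ)
  have hx : (gaussianReal 0 1 (Set.Iic (0:ℝ))).toReal
      = 1 - (gaussianReal 0 1 (Set.Iic (0:ℝ))).toReal := by
    conv_lhs => rw [hsum]
    rw [ENNReal.toReal_sub_of_le h1 ENNReal.one_ne_top]
    simp
  rw [← hIic]
  linarith

/-- measure of the wedge `{w ≤ a z₁ + b z₂, 0 ≤ d z₁ + e z₂}` for an orthogonal matrix. -/
lemma wedge_measure {a b d e w : ℝ}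
    (hnorm : ∀ z : ℝ × ℝ, (a * z.1 + b * z.2) ^ 2 + (d * z.1 + e * z.2) ^ 2 = z.1 ^ 2 + z.2 ^ 2)
    (hdet : a * e - b * d = 1 ∨ a * e - b * d = -1) :
    ((gaussianReal 0 1).prod (gaussianReal 0 1))
        {z : ℝ × ℝ | w ≤ a * z.1 + b * z.2 ∧ 0 ≤ d * z.1 + e * z.2}
      = (gaussianReal 0 1 (Set.Ici w)) * (gaussianReal 0 1 (Set.Ici (0:ℝ))) := by
  have hset : {z : ℝ × ℝ | w ≤ a * z.1 + b * z.2 ∧ 0 ≤ d * z.1 + e * z.2}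
      = (fun z : ℝ × ℝ => (a * z.1 + b * z.2, d * z.1 + e * z.2)) ⁻¹'
          (Set.Ici w ×ˢ Set.Ici (0:ℝ)) := by
    ext z
    simp [Set.mem_prod]
  rw [hset, map_rot_eq hnorm hdet (measurableSet_Ici.prod measurableSet_Ici)]
  rw [Measure.prod_prod]




lemma tail_int {w : ℝ} (hw : 0 < w) :
    ∫ r in Set.Ici w, r * Real.exp (-r ^ 2 / 2) = Real.exp (-w ^ 2 / 2) := by
  rw [integral_Ici_eq_integral_Ioi]
  have hderiv : ∀ x ∈ Set.Ioi w, HasDerivAt (fun r : ℝ => -Real.exp (-r ^ 2 / 2))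
      (x * Real.exp (-x ^ 2 / 2)) x := by
    intro x _
    have h1 : HasDerivAt (fun r : ℝ => -r ^ 2 / 2) (-x) x := by
      have h0 := ((hasDerivAt_pow 2 x).neg.div_const 2)
      refine h0.congr_deriv ?_
      push_cast
      ring
    have h2 := (h1.exp).neg
    have h4 : x * Real.exp (-x ^ 2 / 2) = -(Real.exp (-x ^ 2 / 2) * -x) := by ring
    rw [h4]
    exact h2
  have hpos : ∀ x ∈ Set.Ioi w, 0 ≤ x * Real.exp (-x ^ 2 / 2) := by
    intro x hx
    have : (0:ℝ) < x := lt_trans hw hx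
    positivity
  have hcont : ContinuousWithinAt (fun r : ℝ => -Real.exp (-r ^ 2 / 2)) (Set.Ici w) w := by
    apply Continuous.continuousWithinAt
    fun_prop
  have htend : Filter.Tendsto (fun r : ℝ => -Real.exp (-r ^ 2 / 2)) Filter.atTop (nhds 0) := by
    have h2 : Filter.Tendsto (fun r : ℝ => r ^ 2) Filter.atTop Filter.atTop :=
      Filter.tendsto_pow_atTop two_ne_zero
    have h3 : Filter.Tendsto (fun r : ℝ => -r ^ 2 / 2) Filter.atTop Filter.atBot := by
      apply Filter.Tendsto.atBot_div_const (by norm_num : (0:ℝ) < 2)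
      exact Filter.tendsto_neg_atTop_atBot.comp h2
    have h4 := Real.tendsto_exp_atBot.comp h3
    have := h4.neg
    rwa [neg_zero] at this
  rw [integral_Ioi_of_hasDerivAt_of_nonneg hcont hderiv hpos htend]
  simp

lemma continuous_nrm2 : Continuous nrm2 := by
  unfold nrm2
  exact ((continuous_fst.pow 2).add (continuous_snd.pow 2)).sqrt

lemma setC_meas (φ w : ℝ) : MeasurableSet (setC φ w) := by
  have h0 : MeasurableSet {z : ℝ × ℝ | z ≠ 0} := (measurableSet_singleton (0 : ℝ × ℝ)).compl
  have h1 : MeasurableSet {z : ℝ × ℝ | nrm2 z * Real.cos (φ/2) < z.2} :=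
    measurableSet_lt (continuous_nrm2.mul continuous_const).measurable continuous_snd.measurable
  have h2 : MeasurableSet {z : ℝ × ℝ | w ≤ nrm2 z} :=
    measurableSet_le measurable_const continuous_nrm2.measurable
  have : setC φ w = ({z : ℝ × ℝ | z ≠ 0} ∩ {z : ℝ × ℝ | nrm2 z * Real.cos (φ/2) < z.2})
      ∩ {z : ℝ × ℝ | w ≤ nrm2 z} := by
    ext z
    simp only [setC, coneE, Set.mem_setOf_eq, Set.mem_inter_iff]
  rw [this]
  exact (h0.inter h1).inter h2

lemma sin_gt_iff {φ θ : ℝ} (hφ : φ ∈ Set.Ioo 0 π) (hθ1 : -π < θ) (hθ2 : θ < π) :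
    Real.cos (φ/2) < Real.sin θ ↔ π/2 - φ/2 < θ ∧ θ < π/2 + φ/2 := by
  have hc := hc_pos hφ
  have hpi := Real.pi_pos
  have hφ1 := hφ.1
  have hφ2 := hφ.2
  constructor
  · intro h
    have hθpos : 0 < θ := by
      by_contra hh
      push_neg at hh
      have := Real.sin_nonpos_of_nonpos_of_neg_pi_le hh hθ1.le
      linarith
    have habs : |θ - π/2| ≤ π := by
      rw [abs_le]; constructor <;> linarith
    have hcoseq : Real.cos |θ - π/2| = Real.sin θ := by
      rw [Real.cos_abs, Real.cos_sub_pi_div_two]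
    by_contra hcon
    have hge : φ/2 ≤ |θ - π/2| := by
      rw [le_abs]
      rcases not_and_or.1 hcon with h' | h'
      · push_neg at h'; right; linarith
      · push_neg at h'; left; linarith
    have := Real.cos_le_cos_of_nonneg_of_le_pi (by linarith : (0:ℝ) ≤ φ/2) habs hge
    rw [hcoseq] at this
    linarith
  · rintro ⟨h1, h2⟩
    have habs : |θ - π/2| < φ/2 := abs_lt.2 ⟨by linarith, by linarith⟩
    have := Real.cos_lt_cos_of_nonneg_of_le_pi (abs_nonneg _) (by linarith : φ/2 ≤ π) habs
    rwa [Real.cos_abs, Real.cos_sub_pi_div_two] at this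

/-- the measure of the sector piece. -/
lemma muC {φ w : ℝ} (hφ : φ ∈ Set.Ioo 0 π) (hw : 0 < w) :
    ((gaussianReal 0 1).prod (gaussianReal 0 1)) (setC φ w)
      = ENNReal.ofReal ((2 * π)⁻¹ * Real.exp (-w ^ 2 / 2) * φ) := by
  have hpi := Real.pi_pos
  set G : ℝ × ℝ → ℝ := fun p => gaussianPDFReal 0 1 p.1 * gaussianPDFReal 0 1 p.2 with hG
  have hGnn : ∀ p, 0 ≤ G p := fun p =>
    mul_nonneg (gaussianPDFReal_nonneg 0 1 p.1) (gaussianPDFReal_nonneg 0 1 p.2)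
  have hGint : Integrable G (volume : Measure (ℝ × ℝ)) := by
    rw [Measure.volume_eq_prod]
    exact Integrable.mul_prod (integrable_gaussianPDFReal 0 1) (integrable_gaussianPDFReal 0 1)
  have hCmeas := setC_meas φ w
  have step1 : ((gaussianReal 0 1).prod (gaussianReal 0 1)) (setC φ w)
      = ENNReal.ofReal (∫ z in setC φ w, G z) := by
    rw [mu2_eq, withDensity_apply _ hCmeas]
    rw [ofReal_integral_eq_lintegral_ofReal (hGint.restrict)
      (Filter.Eventually.of_forall hGnn)]
    apply lintegral_congr
    intro p
    rw [gden_eq]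
    congr 1
    show (2 * π)⁻¹ * Real.exp (-(p.1 ^ 2 + p.2 ^ 2) / 2)
        = gaussianPDFReal 0 1 p.1 * gaussianPDFReal 0 1 p.2
    rw [Dmul]
  rw [step1]
  congr 1
  -- now the polar computation
  set α := π/2 - φ/2 with hα
  set β := π/2 + φ/2 with hβ
  set S : Set (ℝ × ℝ) := Set.Ici w ×ˢ Set.Ioo α β with hS
  have hSsub : S ⊆ polarCoord.target := by
    rintro ⟨r, θ⟩ ⟨h1, h2⟩
    constructor
    · exact lt_of_lt_of_le hw h1
    · simp only [Set.mem_Ioo] at h2 ⊢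
      constructor
      · have : (0:ℝ) < α := by rw [hα]; linarith [hφ.2]
        linarith [h2.1]
      · have : β < π := by rw [hβ]; linarith [hφ.2]
        linarith [h2.2]
  have hSmeas : MeasurableSet S := measurableSet_Ici.prod measurableSet_Ioo
  set h : ℝ × ℝ → ℝ := fun p => p.1 * ((2 * π)⁻¹ * Real.exp (-p.1 ^ 2 / 2)) with hh
  have key : ∀ p ∈ polarCoord.target, p.1 • (Set.indicator (setC φ w) G) (polarCoord.symm p)
      = S.indicator h p := by
    rintro ⟨r, θ⟩ hp
    have hr : 0 < r := hp.1
    have hθ : θ ∈ Set.Ioo (-π) π := hp.2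
    have hsymm : polarCoord.symm (r, θ) = (r * Real.cos θ, r * Real.sin θ) := rfl
    have hnrm : nrm2 (r * Real.cos θ, r * Real.sin θ) = r := by
      unfold nrm2
      rw [show (r * Real.cos θ) ^ 2 + (r * Real.sin θ) ^ 2 = r ^ 2 by
        linear_combination r ^ 2 * Real.sin_sq_add_cos_sq θ]
      exact Real.sqrt_sq hr.le
    have hiff : (r * Real.cos θ, r * Real.sin θ) ∈ setC φ w ↔ (r, θ) ∈ S := by
      constructor
      · rintro ⟨⟨hne, hgt⟩, hge⟩
        rw [hnrm] at hgt hge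
        have hsin : Real.cos (φ/2) < Real.sin θ := by
          have := (mul_lt_mul_iff_right₀ hr).1 (by
            calc r * Real.cos (φ/2) < (r * Real.cos θ, r * Real.sin θ).2 := hgt
              _ = r * Real.sin θ := rfl)
          exact this
        refine ⟨hge, ?_⟩
        have := (sin_gt_iff hφ hθ.1 hθ.2).1 hsin
        exact ⟨this.1, this.2⟩
      · rintro ⟨h1, h2⟩
        have hsin := (sin_gt_iff hφ hθ.1 hθ.2).2 ⟨h2.1, h2.2⟩
        refine ⟨⟨?_, ?_⟩, ?_⟩
        · intro hzero
          have : nrm2 ((0 : ℝ × ℝ)) = (0:ℝ) := by simp [nrm2]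
          rw [hzero, this] at hnrm
          exact hr.ne hnrm
        · show nrm2 _ * Real.cos (φ/2) < r * Real.sin θ
          rw [hnrm]
          exact (mul_lt_mul_iff_right₀ hr).2 hsin
        · rw [hnrm]; exact h1
    have hGval : G (r * Real.cos θ, r * Real.sin θ) = (2 * π)⁻¹ * Real.exp (-r ^ 2 / 2) := by
      rw [hG]
      show gaussianPDFReal 0 1 (r * Real.cos θ) * gaussianPDFReal 0 1 (r * Real.sin θ) = _
      rw [Dmul]
      rw [show (r * Real.cos θ) ^ 2 + (r * Real.sin θ) ^ 2 = r ^ 2 by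
        linear_combination r ^ 2 * Real.sin_sq_add_cos_sq θ]
    by_cases hmem : (r, θ) ∈ S
    · rw [Set.indicator_of_mem hmem, hsymm, Set.indicator_of_mem (hiff.2 hmem), hGval]
      simp [hh]
    · rw [Set.indicator_of_notMem hmem, hsymm,
        Set.indicator_of_notMem (fun hm => hmem (hiff.1 hm))]
      simp
  calc ∫ z in setC φ w, G z
      = ∫ z, (setC φ w).indicator G z := by rw [integral_indicator hCmeas]
    _ = ∫ p in polarCoord.target, p.1 • (Set.indicator (setC φ w) G) (polarCoord.symm p) :=
        (integral_comp_polarCoord_symm _).symm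
    _ = ∫ p in polarCoord.target, S.indicator h p :=
        setIntegral_congr_fun (polarCoord.open_target.measurableSet) key
    _ = ∫ p in S, h p := by
        rw [integral_indicator hSmeas, Measure.restrict_restrict hSmeas,
          Set.inter_eq_self_of_subset_left hSsub]
    _ = (2 * π)⁻¹ * Real.exp (-w ^ 2 / 2) * φ := by
        rw [hS, Measure.volume_eq_prod, ← Measure.prod_restrict]
        have : ∀ p : ℝ × ℝ, h p = ((2 * π)⁻¹ * (p.1 * Real.exp (-p.1 ^ 2 / 2))) * (fun _ : ℝ => (1:ℝ)) p.2 := by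
          intro p; rw [hh]; simp; ring
        rw [integral_congr_ae (Filter.Eventually.of_forall this)]
        rw [integral_prod_mul (fun x : ℝ => (2 * π)⁻¹ * (x * Real.exp (-x ^ 2 / 2))) (fun _ : ℝ => (1:ℝ))]
        rw [integral_const_mul]
        rw [tail_int hw]
        rw [setIntegral_const]
        rw [measureReal_def, Real.volume_Ioo, smul_eq_mul, mul_one]
        rw [ENNReal.toReal_ofReal (by rw [hα, hβ]; linarith [hφ.1] : (0:ℝ) ≤ β - α)]
        rw [hα, hβ]
        ring





lemma setWp_meas (φ w : ℝ) : MeasurableSet (setWp φ w) := by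
  unfold setWp
  rw [Set.setOf_and]
  exact (measurableSet_le measurable_const (by fun_prop)).inter
    (measurableSet_le measurable_const (by fun_prop))

lemma setWm_meas (φ w : ℝ) : MeasurableSet (setWm φ w) := by
  unfold setWm
  rw [Set.setOf_and]
  exact (measurableSet_le measurable_const (by fun_prop)).inter
    (measurableSet_le measurable_const (by fun_prop))

lemma muWp {φ w : ℝ} (hφ : φ ∈ Set.Ioo 0 π) :
    ((gaussianReal 0 1).prod (gaussianReal 0 1)) (setWp φ w)
      = (gaussianReal 0 1 (Set.Ici w)) * (gaussianReal 0 1 (Set.Ici (0:ℝ))) := by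
  have hcs := hcs φ
  have hset : setWp φ w = {z : ℝ × ℝ |
      w ≤ Real.sin (φ/2) * z.1 + Real.cos (φ/2) * z.2 ∧
      0 ≤ Real.cos (φ/2) * z.1 + -(Real.sin (φ/2)) * z.2} := by
    ext z
    simp only [setWp, Set.mem_setOf_eq]
    constructor <;> (rintro ⟨h1, h2⟩; exact ⟨h1, by linarith⟩)
  rw [hset]
  apply wedge_measure
  · intro z
    linear_combination (z.1 ^ 2 + z.2 ^ 2) * hcs
  · right
    linear_combination -hcs

lemma muWm {φ w : ℝ} (hφ : φ ∈ Set.Ioo 0 π) :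
    ((gaussianReal 0 1).prod (gaussianReal 0 1)) (setWm φ w)
      = (gaussianReal 0 1 (Set.Ici w)) * (gaussianReal 0 1 (Set.Ici (0:ℝ))) := by
  have hcs := hcs φ
  have hset : setWm φ w = {z : ℝ × ℝ |
      w ≤ -(Real.sin (φ/2)) * z.1 + Real.cos (φ/2) * z.2 ∧
      0 ≤ -(Real.cos (φ/2)) * z.1 + -(Real.sin (φ/2)) * z.2} := by
    ext z
    simp only [setWm, Set.mem_setOf_eq]
    constructor <;> (rintro ⟨h1, h2⟩; exact ⟨h1, by linarith⟩)
  rw [hset]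
  apply wedge_measure
  · intro z
    linear_combination (z.1 ^ 2 + z.2 ^ 2) * hcs
  · left
    linear_combination hcs

end OSC


open OSC in
/-- Let `z` be a standard bivariate normal vector, `φ ∈ (0, π)`, `w > 0`, and `E(φ)` the open
cone of half-angle `φ/2` about the positive `z₂`-axis. Then
`P( sup_{u ∈ E(φ)} (u·z)/‖u‖ < w ) = (φ/(2π))·F₂(w²) + (π-φ)/(2π) + (1/2)·F₁(w²)`. -/
theorem one_sided_coverage_probability
    (φ w : ℝ) (hφ : φ ∈ Set.Ioo 0 π) (hw : 0 < w) :
    (((gaussianReal 0 1).prod (gaussianReal 0 1))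
        {z : ℝ × ℝ | sSup ((fun u => dot2 u z / nrm2 u) '' coneE φ) < w}).toReal =
      (φ / (2 * π)) * chi2cdf (w ^ 2) + (π - φ) / (2 * π) + (1 / 2) * chi1cdf (w ^ 2) := by
  have hpi := Real.pi_pos
  set μ2 := (gaussianReal 0 1).prod (gaussianReal 0 1) with hμ2
  rw [event_eq hφ hw]
  set U := setC φ w ∪ setWp φ w ∪ setWm φ w with hU
  have hCm := setC_meas φ w
  have hWpm := setWp_meas φ w
  have hWmm := setWm_meas φ w
  have hUm : MeasurableSet U := (hCm.union hWpm).union hWmm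
  -- μ2 U = μC + μWp + μWm
  have hdisj1 : Disjoint (setC φ w ∪ setWp φ w) (setWm φ w) := by
    rw [Set.disjoint_union_left]
    constructor
    · exact Set.disjoint_iff_inter_eq_empty.2 (disj_C_Wm hφ)
    · exact Set.disjoint_iff_inter_eq_empty.2 (disj_Wp_Wm hφ hw)
  have hdisj2 : Disjoint (setC φ w) (setWp φ w) :=
    Set.disjoint_iff_inter_eq_empty.2 (disj_C_Wp hφ)
  have hsum : μ2 U = μ2 (setC φ w) + μ2 (setWp φ w) + μ2 (setWm φ w) := by
    rw [hU, measure_union hdisj1 hWmm, measure_union hdisj2 hWpm]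
  have hcompl : μ2 Uᶜ = 1 - μ2 U := prob_compl_eq_one_sub hUm
  have hUle : μ2 U ≤ 1 := prob_le_one
  have htoReal : (μ2 Uᶜ).toReal = 1 - (μ2 U).toReal := by
    rw [hcompl, ENNReal.toReal_sub_of_le hUle ENNReal.one_ne_top, ENNReal.toReal_one]
  rw [htoReal]
  have hsumR : (μ2 U).toReal
      = (μ2 (setC φ w)).toReal + (μ2 (setWp φ w)).toReal + (μ2 (setWm φ w)).toReal := by
    rw [hsum, ENNReal.toReal_add (by finiteness) (by finiteness),
      ENNReal.toReal_add (by finiteness) (by finiteness)]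
  rw [hsumR]
  have hC : (μ2 (setC φ w)).toReal = (2 * π)⁻¹ * Real.exp (-w ^ 2 / 2) * φ := by
    rw [hμ2, muC hφ hw, ENNReal.toReal_ofReal (mul_nonneg (by positivity) hφ.1.le)]
  have hW : (μ2 (setWp φ w)).toReal = (1 - stdNormalCDF w) * (1 / 2) ∧
      (μ2 (setWm φ w)).toReal = (1 - stdNormalCDF w) * (1 / 2) := by
    constructor
    · rw [hμ2, muWp hφ, ENNReal.toReal_mul, mu1_Ici_toReal, mu1_Ici_zero_toReal]
    · rw [hμ2, muWm hφ, ENNReal.toReal_mul, mu1_Ici_toReal, mu1_Ici_zero_toReal]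
  rw [hC, hW.1, hW.2]
  have hsqrt : Real.sqrt (w ^ 2) = w := Real.sqrt_sq hw.le
  unfold chi1cdf chi2cdf
  rw [hsqrt]
  rw [show -(w ^ 2 / 2) = -w ^ 2 / 2 by ring]
  field_simp
  ring
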